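/- arXiv:0806.0197 — 4 statements merged into one kernel-verified Lean document; each statement's English description precedes it below -/
import Mathlib

section
/- (Weighted maximal inequality) For any $1 < r < \infty$ there is a constant $C_r$ such that for all measurable $f, \phi : \mathbb{T} \to \mathbb{C}$, $\int_\mathbb{T} (Mf)^r |\phi| \, dm \le C_r \int_\mathbb{T} |f|^r \, M\phi \, dm$. -/
open MeasureTheory

/-- The Hardy–Littlewood maximal function on the circle `𝕋 = ℝ/ℤ`. -/
noncomputable def maxFn (f : AddCircle (1:ℝ) → ℂ) (x : AddCircle (1:ℝ)) : ENNReal :=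
  ⨆ (c : AddCircle (1:ℝ)) (ℓ : ℝ) (_ : 0 < ℓ) (_ : ℓ ≤ 1) (_ : dist x c ≤ ℓ / 2),
    (ENNReal.ofReal ℓ)⁻¹ * ∫⁻ y in {y : AddCircle (1:ℝ) | dist y c ≤ ℓ / 2}, (‖f y‖₊ : ENNReal)

open MeasureTheory Set Metric ENNReal

local notation "𝕋" => AddCircle (1:ℝ)

noncomputable def MB (u : 𝕋 → ℝ≥0∞) (x : 𝕋) : ℝ≥0∞ :=
  ⨆ (c : 𝕋) (ℓ : ℝ) (_ : 0 < ℓ) (_ : ℓ ≤ 1) (_ : dist x c ≤ ℓ / 2),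
    (ENNReal.ofReal ℓ)⁻¹ * ∫⁻ y in {y : 𝕋 | dist y c ≤ ℓ / 2}, u y

lemma ball_set_eq (c : 𝕋) (ℓ : ℝ) : {y : 𝕋 | dist y c ≤ ℓ / 2} = closedBall c (ℓ/2) := rfl

lemma dist_le_half (x c : 𝕋) : dist x c ≤ 1/2 := by
  have := AddCircle.norm_le_half_period (1:ℝ) one_ne_zero (x := x - c)
  simpa [dist_eq_norm, abs_one] using this

lemma ball_univ (c : 𝕋) : {y : 𝕋 | dist y c ≤ 1 / 2} = univ := by
  rw [ball_set_eq]
  exact AddCircle.closedBall_eq_univ_of_half_period_le (p := (1:ℝ)) one_ne_zero c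
    (by rw [abs_one])

lemma vol_ball (c : 𝕋) {ℓ : ℝ} (h0 : 0 ≤ ℓ) (h1 : ℓ ≤ 1) :
    volume {y : 𝕋 | dist y c ≤ ℓ / 2} = ENNReal.ofReal ℓ := by
  rw [ball_set_eq, AddCircle.volume_closedBall]
  have : (1:ℝ) ⊓ 2 * (ℓ/2) = ℓ := by
    rw [min_eq_right]; ring; linarith
  rw [this]

lemma le_MB (u : 𝕋 → ℝ≥0∞) {x c : 𝕋} {ℓ : ℝ} (h0 : 0 < ℓ) (h1 : ℓ ≤ 1)
    (hx : dist x c ≤ ℓ / 2) :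
    (ENNReal.ofReal ℓ)⁻¹ * ∫⁻ y in {y : 𝕋 | dist y c ≤ ℓ / 2}, u y ≤ MB u x := by
  refine le_iSup_of_le c (le_iSup_of_le ℓ ?_)
  rw [iSup_pos h0, iSup_pos h1, iSup_pos hx]

lemma MB_le (u : 𝕋 → ℝ≥0∞) (x : 𝕋) {a : ℝ≥0∞}
    (h : ∀ c ℓ, 0 < ℓ → ℓ ≤ 1 → dist x c ≤ ℓ/2 →
      (ENNReal.ofReal ℓ)⁻¹ * ∫⁻ y in {y : 𝕋 | dist y c ≤ ℓ / 2}, u y ≤ a) :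
    MB u x ≤ a := by
  refine iSup_le fun c => iSup_le fun ℓ => iSup_le fun h0 => iSup_le fun h1 => iSup_le fun hx => ?_
  exact h c ℓ h0 h1 hx

lemma MB_const_bound (u : 𝕋 → ℝ≥0∞) (x : 𝕋) {t : ℝ≥0∞} (h : ∀ y, u y ≤ t) :
    MB u x ≤ t := by
  refine MB_le u x fun c ℓ h0 h1 hx => ?_
  calc (ENNReal.ofReal ℓ)⁻¹ * ∫⁻ y in {y : 𝕋 | dist y c ≤ ℓ / 2}, u y
      ≤ (ENNReal.ofReal ℓ)⁻¹ * ∫⁻ _ in {y : 𝕋 | dist y c ≤ ℓ / 2}, t := by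
        gcongr; exact h _
    _ = (ENNReal.ofReal ℓ)⁻¹ * (t * ENNReal.ofReal ℓ) := by
        rw [setLIntegral_const, vol_ball c h0.le h1]
    _ ≤ t := by
        rw [mul_comm t, ← mul_assoc, ENNReal.inv_mul_cancel (by simpa using h0) ofReal_ne_top,
          one_mul]

lemma MB_add_le (u v : 𝕋 → ℝ≥0∞) (hu : Measurable u) (x : 𝕋) :
    MB (fun y => u y + v y) x ≤ MB u x + MB v x := by
  refine MB_le _ x fun c ℓ h0 h1 hx => ?_
  rw [lintegral_add_left hu, mul_add]
  exact add_le_add (le_MB u h0 h1 hx) (le_MB v h0 h1 hx)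


lemma measurable_rpow_const (c : ℝ) : Measurable fun s : ℝ => s ^ c := by
  have heq : (fun s : ℝ => s ^ c) = fun s =>
      if s = 0 then (if c = 0 then 1 else 0)
      else Real.exp (Real.log s * c) * (if s < 0 then Real.cos (c * Real.pi) else 1) := by
    funext s
    rcases lt_trichotomy s 0 with h | h | h
    · rw [if_neg h.ne, if_pos h, Real.rpow_def_of_neg h]
    · rw [h, if_pos rfl]
      by_cases hc : c = 0
      · rw [if_pos hc, hc, Real.rpow_zero]
      · rw [if_neg hc, Real.zero_rpow hc]
    · rw [if_neg h.ne', if_neg (not_lt.mpr h.le), Real.rpow_def_of_pos h, mul_one]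
  rw [heq]
  refine Measurable.ite (show MeasurableSet {s : ℝ | s = 0} from measurableSet_eq) measurable_const ?_
  exact ((Real.measurable_log.mul measurable_const).exp).mul
    (Measurable.ite measurableSet_Iio measurable_const measurable_const)

lemma measurable_MB (u : 𝕋 → ℝ≥0∞) : Measurable (MB u) := by
  obtain ⟨D, hDc, hDd⟩ := TopologicalSpace.exists_countable_dense 𝕋
  have hDne : D.Nonempty := hDd.nonempty
  haveI : Countable D := hDc.to_subtype
  set g : 𝕋 → ℝ≥0∞ := fun x => ⨆ (c : D) (q : ℚ) (_ : 0 < (q:ℝ)) (_ : (q:ℝ) ≤ 1)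
      (_ : dist x (c:𝕋) ≤ (q:ℝ)/2),
      (ENNReal.ofReal (q:ℝ))⁻¹ * ∫⁻ y in {y : 𝕋 | dist y (c:𝕋) ≤ (q:ℝ)/2}, u y with hgdef
  have hgm : Measurable g := by
    apply Measurable.iSup; intro c
    apply Measurable.iSup; intro q
    by_cases h0 : 0 < (q:ℝ)
    · by_cases h1 : (q:ℝ) ≤ 1
      · simp only [iSup_pos h0, iSup_pos h1]
        have : (fun x : 𝕋 => ⨆ (_ : dist x (c:𝕋) ≤ (q:ℝ)/2),
            (ENNReal.ofReal (q:ℝ))⁻¹ * ∫⁻ y in {y : 𝕋 | dist y (c:𝕋) ≤ (q:ℝ)/2}, u y)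
            = (closedBall (c:𝕋) ((q:ℝ)/2)).indicator (fun _ =>
              (ENNReal.ofReal (q:ℝ))⁻¹ * ∫⁻ y in {y : 𝕋 | dist y (c:𝕋) ≤ (q:ℝ)/2}, u y) := by
          funext x
          by_cases h : dist x (c:𝕋) ≤ (q:ℝ)/2
          · rw [iSup_pos h, indicator_of_mem (mem_closedBall.mpr h)]
          · rw [iSup_neg h, indicator_of_notMem (fun hc => h (mem_closedBall.mp hc))]
            rfl
        rw [this]
        exact measurable_const.indicator measurableSet_closedBall
      · simp only [h1, iSup_false, iSup_bot]; exact measurable_const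
    · simp only [h0, iSup_false, iSup_bot]; exact measurable_const
  have key : ∀ x, MB u x = g x := by
    intro x
    have gterm : ∀ (c' : 𝕋), c' ∈ D → ∀ (q : ℚ), 0 < (q:ℝ) → (q:ℝ) ≤ 1 →
        dist x c' ≤ (q:ℝ)/2 →
        (ENNReal.ofReal (q:ℝ))⁻¹ * ∫⁻ y in {y : 𝕋 | dist y c' ≤ (q:ℝ)/2}, u y ≤ g x := by
      intro c' hc' q hq0 hq1 hxq
      rw [hgdef]
      refine le_iSup_of_le ⟨c', hc'⟩ (le_iSup_of_le q ?_)
      rw [iSup_pos hq0, iSup_pos hq1, iSup_pos hxq]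
    apply le_antisymm
    · refine MB_le u x fun c ℓ h0 h1 hx => ?_
      rcases eq_or_lt_of_le h1 with h1e | h1l
      · -- ℓ = 1
        subst h1e
        obtain ⟨c₀, hc₀⟩ := hDne
        have h := gterm c₀ hc₀ 1 (by norm_num) (by norm_num)
          (by rw [Rat.cast_one]; exact dist_le_half x c₀)
        rw [Rat.cast_one] at h
        rw [ball_univ c₀] at h
        rw [ball_univ c]
        simpa using h
      · -- ℓ < 1
        set s := ∫⁻ y in {y : 𝕋 | dist y c ≤ ℓ/2}, u y with hs
        by_cases hstop : s = ⊤
        · obtain ⟨q, hq1, hq2⟩ := exists_rat_btwn h1l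
          have hq0 : 0 < (q:ℝ) := lt_trans h0 hq1
          obtain ⟨c', hc', hcc'⟩ := hDd.exists_dist_lt c (by linarith : (0:ℝ) < ((q:ℝ)-ℓ)/2)
          have hsub : {y : 𝕋 | dist y c ≤ ℓ/2} ⊆ {y : 𝕋 | dist y c' ≤ (q:ℝ)/2} := by
            intro y hy
            simp only [mem_setOf_eq] at hy ⊢
            calc dist y c' ≤ dist y c + dist c c' := dist_triangle _ _ _
              _ ≤ ℓ/2 + ((q:ℝ)-ℓ)/2 := add_le_add hy hcc'.le
              _ = (q:ℝ)/2 := by ring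
          have hxq : dist x c' ≤ (q:ℝ)/2 := by
            calc dist x c' ≤ dist x c + dist c c' := dist_triangle _ _ _
              _ ≤ ℓ/2 + ((q:ℝ)-ℓ)/2 := add_le_add hx hcc'.le
              _ = (q:ℝ)/2 := by ring
          have hbig : ∫⁻ y in {y : 𝕋 | dist y c' ≤ (q:ℝ)/2}, u y = ⊤ := by
            have hmono : s ≤ ∫⁻ y in {y : 𝕋 | dist y c' ≤ (q:ℝ)/2}, u y :=
              lintegral_mono_set hsub
            rw [hstop] at hmono
            exact top_le_iff.mp hmono
          have h := gterm c' hc' q hq0 hq2.le hxq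
          rw [hbig, ENNReal.mul_top (by simpa using hq0)] at h
          exact le_trans le_top (le_of_eq (top_le_iff.mp h).symm)
        · -- s finite
          by_contra hcon
          push_neg at hcon
          obtain ⟨a, ha1, ha2⟩ := exists_between hcon
          rcases eq_or_ne a 0 with rfl | ha0
          · exact (not_le.mpr ha1) zero_le
          have hvtop : (ENNReal.ofReal ℓ)⁻¹ * s ≠ ⊤ :=
            ENNReal.mul_ne_top (ENNReal.inv_ne_top.mpr (by simpa using h0)) hstop
          have hatop : a ≠ ⊤ := (ha2.trans_le le_top).ne
          set A := a.toReal with hAdef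
          set S := s.toReal with hSdef
          have hvr : ((ENNReal.ofReal ℓ)⁻¹ * s).toReal = ℓ⁻¹ * S := by
            rw [ENNReal.toReal_mul, ENNReal.toReal_inv, ENNReal.toReal_ofReal h0.le]
          have haS : A < ℓ⁻¹ * S := by
            rw [← hvr]
            exact (ENNReal.toReal_lt_toReal hatop hvtop).mpr ha2
          have hA0 : 0 < A := ENNReal.toReal_pos ha0 hatop
          have hS0 : 0 < S := by
            have h' : 0 < ℓ⁻¹ * S := hA0.trans haS
            rcases mul_pos_iff.mp h' with ⟨_, hS⟩ | ⟨hinv, _⟩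
            · exact hS
            · exact absurd (inv_pos.mpr h0) (not_lt.mpr hinv.le)
          have hℓSA : ℓ < S / A := by
            rw [lt_div_iff₀ hA0]
            calc ℓ * A < ℓ * (ℓ⁻¹ * S) := (mul_lt_mul_iff_right₀ h0).mpr haS
              _ = S := by rw [← mul_assoc, mul_inv_cancel₀ h0.ne', one_mul]
          obtain ⟨q, hq1, hq2⟩ := exists_rat_btwn (lt_min h1l hℓSA)
          have hq0 : 0 < (q:ℝ) := lt_trans h0 hq1
          have hqle1 : (q:ℝ) ≤ 1 := le_trans hq2.le (min_le_left _ _)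
          have hqSA : (q:ℝ) < S / A := lt_of_lt_of_le hq2 (min_le_right _ _)
          obtain ⟨c', hc', hcc'⟩ := hDd.exists_dist_lt c (by linarith : (0:ℝ) < ((q:ℝ)-ℓ)/2)
          have hsub : {y : 𝕋 | dist y c ≤ ℓ/2} ⊆ {y : 𝕋 | dist y c' ≤ (q:ℝ)/2} := by
            intro y hy
            simp only [mem_setOf_eq] at hy ⊢
            calc dist y c' ≤ dist y c + dist c c' := dist_triangle _ _ _
              _ ≤ ℓ/2 + ((q:ℝ)-ℓ)/2 := add_le_add hy hcc'.le
              _ = (q:ℝ)/2 := by ring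
          have hxq : dist x c' ≤ (q:ℝ)/2 := by
            calc dist x c' ≤ dist x c + dist c c' := dist_triangle _ _ _
              _ ≤ ℓ/2 + ((q:ℝ)-ℓ)/2 := add_le_add hx hcc'.le
              _ = (q:ℝ)/2 := by ring
          have hest : a ≤ (ENNReal.ofReal (q:ℝ))⁻¹ *
              ∫⁻ y in {y : 𝕋 | dist y c' ≤ (q:ℝ)/2}, u y := by
            calc a = ENNReal.ofReal A := (ofReal_toReal hatop).symm
              _ ≤ ENNReal.ofReal (S / (q:ℝ)) := by
                  apply ENNReal.ofReal_le_ofReal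
                  rw [le_div_iff₀ hq0]
                  have := (lt_div_iff₀ hA0).mp hqSA
                  nlinarith
              _ = (ENNReal.ofReal (q:ℝ))⁻¹ * ENNReal.ofReal S := by
                  rw [ENNReal.ofReal_div_of_pos hq0, div_eq_mul_inv, mul_comm]
              _ ≤ _ := by
                  gcongr
                  rw [show ENNReal.ofReal S = s from by rw [hSdef, ofReal_toReal hstop]]
                  exact lintegral_mono_set hsub
          exact absurd (le_trans hest (gterm c' hc' q hq0 hqle1 hxq)) (not_le.mpr ha1)
    · rw [hgdef]
      refine iSup_le fun c => iSup_le fun q => iSup_le fun h0 => iSup_le fun h1 =>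
        iSup_le fun hx => ?_
      refine le_iSup_of_le (c:𝕋) (le_iSup_of_le ((q:ℚ):ℝ) ?_)
      rw [iSup_pos h0, iSup_pos h1, iSup_pos hx]
  exact (funext key : MB u = g) ▸ hgm

lemma weak (u w : 𝕋 → ℝ≥0∞) (hu : Measurable u) (t : ℝ≥0∞) :
    t * ∫⁻ x in {x : 𝕋 | t < MB u x}, w x ≤ 5 * ∫⁻ y, u y * MB w y := by
  set E := {x : 𝕋 | t < MB u x} with hE
  have hch : ∀ z ∈ E, ∃ c : 𝕋, ∃ ℓ : ℝ, (0 < ℓ ∧ ℓ ≤ 1) ∧ dist z c ≤ ℓ/2 ∧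
      t * ENNReal.ofReal ℓ ≤ ∫⁻ y in {y : 𝕋 | dist y c ≤ ℓ/2}, u y := by
    intro z hz
    rw [hE, mem_setOf_eq, MB] at hz
    simp only [lt_iSup_iff] at hz
    obtain ⟨c, ℓ, h0, h1, hzc, hlt⟩ := hz
    refine ⟨c, ℓ, ⟨h0, h1⟩, hzc, ?_⟩
    have h0' : ENNReal.ofReal ℓ ≠ 0 := by simpa using h0
    calc t * ENNReal.ofReal ℓ
        ≤ ((ENNReal.ofReal ℓ)⁻¹ * ∫⁻ y in {y : 𝕋 | dist y c ≤ ℓ/2}, u y) * ENNReal.ofReal ℓ :=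
          mul_le_mul_left hlt.le _
      _ = ∫⁻ y in {y : 𝕋 | dist y c ≤ ℓ/2}, u y := by
          rw [mul_comm _ (ENNReal.ofReal ℓ), ← mul_assoc,
            ENNReal.mul_inv_cancel h0' ofReal_ne_top, one_mul]
  choose! c ℓ hℓ hzc hint using hch
  obtain ⟨𝔲, h𝔲E, h𝔲disj, h𝔲cov⟩ :=
    Vitali.exists_disjoint_subfamily_covering_enlargement_closedBall
      E c (fun z => ℓ z / 2) (1/2) (fun z hz => by linarith [(hℓ z hz).2]) 5 (by norm_num)
  have hdisj : Pairwise (Function.onFun Disjoint fun i : 𝔲 => closedBall (c i) (ℓ i / 2)) := by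
    intro i j hij
    exact h𝔲disj i.2 j.2 (Subtype.coe_injective.ne hij)
  have hcnt : 𝔲.Countable := by
    have hpos := MeasureTheory.Measure.countable_meas_pos_of_disjoint_iUnion
      (μ := (volume : Measure 𝕋)) (As := fun i : 𝔲 => closedBall (c i) (ℓ i / 2))
      (fun _ => measurableSet_closedBall) hdisj
    have hall : ∀ i : 𝔲, 0 < volume (closedBall (c (i:𝕋)) (ℓ (i:𝕋) / 2)) := by
      intro i
      rw [AddCircle.volume_closedBall]
      have h0i := (hℓ i (h𝔲E i.2)).1
      have h1i := (hℓ i (h𝔲E i.2)).2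
      apply ENNReal.ofReal_pos.mpr
      rw [lt_min_iff]
      constructor <;> linarith
    have huniv : {i : 𝔲 | 0 < volume (closedBall (c (i:𝕋)) (ℓ (i:𝕋) / 2))} = univ :=
      eq_univ_iff_forall.mpr hall
    rw [huniv] at hpos
    exact countable_coe_iff.mp (countable_univ_iff.mp hpos)
  haveI : Countable 𝔲 := hcnt.to_subtype
  have key : ∀ i : 𝕋, i ∈ 𝔲 → t * ∫⁻ x in closedBall (c i) (5 * (ℓ i / 2)), w x
      ≤ 5 * ∫⁻ y in closedBall (c i) (ℓ i / 2), u y * MB w y := by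
    intro i hi
    have hiE : i ∈ E := h𝔲E hi
    have h0i := (hℓ i hiE).1
    have h1i := (hℓ i hiE).2
    set ℓ' := min (5 * ℓ i) 1 with hℓ'def
    have hℓ'0 : 0 < ℓ' := lt_min (by linarith) one_pos
    have hℓ'1 : ℓ' ≤ 1 := min_le_right _ _
    have hsub : closedBall (c i) (5 * (ℓ i / 2)) ⊆ {y : 𝕋 | dist y (c i) ≤ ℓ'/2} := by
      rcases le_or_gt (5 * ℓ i) 1 with h | h
      · rw [hℓ'def, min_eq_left h]
        intro y hy
        have := mem_closedBall.mp hy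
        simp only [mem_setOf_eq]
        linarith
      · rw [hℓ'def, min_eq_right h.le, ball_univ]
        exact subset_univ _
    have hMBw : ∀ y ∈ closedBall (c i) (ℓ i / 2),
        ∫⁻ x in closedBall (c i) (5 * (ℓ i / 2)), w x
          ≤ ENNReal.ofReal (5 * ℓ i) * MB w y := by
      intro y hy
      have hy' : dist y (c i) ≤ ℓ'/2 := by
        have := mem_closedBall.mp hy
        have : dist y (c i) ≤ ℓ i / 2 := this
        have hle : ℓ i ≤ ℓ' := le_min (by linarith) h1i
        linarith
      have h5 : (ENNReal.ofReal ℓ')⁻¹ * ∫⁻ x in {x : 𝕋 | dist x (c i) ≤ ℓ'/2}, w x ≤ MB w y :=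
        le_MB w hℓ'0 hℓ'1 hy'
      have hne : ENNReal.ofReal (5 * ℓ i) ≠ 0 := by
        simp only [ne_eq, ENNReal.ofReal_eq_zero, not_le]
        linarith
      calc ∫⁻ x in closedBall (c i) (5 * (ℓ i / 2)), w x
          = ENNReal.ofReal (5 * ℓ i) *
            ((ENNReal.ofReal (5 * ℓ i))⁻¹ * ∫⁻ x in closedBall (c i) (5 * (ℓ i / 2)), w x) := by
            rw [← mul_assoc, ENNReal.mul_inv_cancel hne ofReal_ne_top, one_mul]
        _ ≤ ENNReal.ofReal (5 * ℓ i) * MB w y := by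
            gcongr
            refine le_trans ?_ h5
            apply mul_le_mul'
            · exact ENNReal.inv_le_inv.mpr (ofReal_le_ofReal (min_le_left _ _))
            · exact lintegral_mono_set hsub
    have hcancel : ENNReal.ofReal (ℓ i) ≠ 0 := by simpa using h0i
    rw [← ENNReal.mul_le_mul_iff_right hcancel ofReal_ne_top]
    calc ENNReal.ofReal (ℓ i) * (t * ∫⁻ x in closedBall (c i) (5 * (ℓ i / 2)), w x)
        = (t * ENNReal.ofReal (ℓ i)) * ∫⁻ x in closedBall (c i) (5 * (ℓ i / 2)), w x := by
          ring
      _ ≤ (∫⁻ y in {y : 𝕋 | dist y (c i) ≤ ℓ i / 2}, u y) *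
            ∫⁻ x in closedBall (c i) (5 * (ℓ i / 2)), w x := by
          gcongr
          exact hint i hiE
      _ = ∫⁻ y in closedBall (c i) (ℓ i / 2),
            u y * ∫⁻ x in closedBall (c i) (5 * (ℓ i / 2)), w x := by
          rw [← ball_set_eq]
          exact (lintegral_mul_const'' _ hu.aemeasurable).symm
      _ ≤ ∫⁻ y in closedBall (c i) (ℓ i / 2),
            u y * (ENNReal.ofReal (5 * ℓ i) * MB w y) := by
          refine setLIntegral_mono (hu.mul (measurable_const.mul (measurable_MB w))) ?_
          intro y hy
          exact mul_le_mul_right (hMBw y hy) (u y)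
      _ = ENNReal.ofReal (5 * ℓ i) * ∫⁻ y in closedBall (c i) (ℓ i / 2), u y * MB w y := by
          rw [← lintegral_const_mul' _ _ ofReal_ne_top]
          congr 1
          funext y
          ring
      _ = ENNReal.ofReal (ℓ i) * (5 * ∫⁻ y in closedBall (c i) (ℓ i / 2), u y * MB w y) := by
          rw [show (5:ℝ) * ℓ i = ℓ i * 5 by ring, ENNReal.ofReal_mul h0i.le]
          rw [show ENNReal.ofReal (5:ℝ) = 5 by norm_num]
          ring
  have hcover : E ⊆ ⋃ i : 𝔲, closedBall (c (i:𝕋)) (5 * (ℓ (i:𝕋) / 2)) := by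
    intro z hz
    obtain ⟨b, hb, hsub'⟩ := h𝔲cov z hz
    have hzmem : z ∈ closedBall (c z) (ℓ z / 2) := mem_closedBall.mpr (hzc z hz)
    exact mem_iUnion.mpr ⟨⟨b, hb⟩, hsub' hzmem⟩
  calc t * ∫⁻ x in E, w x
      ≤ t * ∫⁻ x in ⋃ i : 𝔲, closedBall (c (i:𝕋)) (5 * (ℓ (i:𝕋) / 2)), w x :=
        mul_le_mul_right (lintegral_mono_set hcover) t
    _ ≤ t * ∑' i : 𝔲, ∫⁻ x in closedBall (c (i:𝕋)) (5 * (ℓ (i:𝕋) / 2)), w x :=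
        mul_le_mul_right (lintegral_iUnion_le _ _) t
    _ = ∑' i : 𝔲, t * ∫⁻ x in closedBall (c (i:𝕋)) (5 * (ℓ (i:𝕋) / 2)), w x :=
        ENNReal.tsum_mul_left.symm
    _ ≤ ∑' i : 𝔲, 5 * ∫⁻ y in closedBall (c (i:𝕋)) (ℓ (i:𝕋) / 2), u y * MB w y :=
        ENNReal.tsum_le_tsum (fun i => key i i.2)
    _ = 5 * ∑' i : 𝔲, ∫⁻ y in closedBall (c (i:𝕋)) (ℓ (i:𝕋) / 2), u y * MB w y :=
        ENNReal.tsum_mul_left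
    _ = 5 * ∫⁻ y in ⋃ i : 𝔲, closedBall (c (i:𝕋)) (ℓ (i:𝕋) / 2), u y * MB w y := by
        rw [lintegral_iUnion (fun _ => measurableSet_closedBall) hdisj]
    _ ≤ 5 * ∫⁻ y, u y * MB w y :=
        mul_le_mul_right (setLIntegral_le_lintegral _ _) 5

lemma base_int {p : ℝ} (hp : 0 < p) {A : ℝ} (hA : 0 ≤ A) :
    ∫⁻ s in Ioo (0:ℝ) A, ENNReal.ofReal (p * s^(p-1)) = ENNReal.ofReal (A^p) := by
  have hint : IntervalIntegrable (fun s : ℝ => p * s^(p-1)) volume 0 A :=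
    (intervalIntegral.intervalIntegrable_rpow' (by linarith)).const_mul p
  have hIoo : IntegrableOn (fun s : ℝ => p * s^(p-1)) (Ioo 0 A) volume := by
    have h1 : IntegrableOn (fun s : ℝ => p * s^(p-1)) (Ioc 0 A) volume := by
      rw [← uIoc_of_le hA]
      exact hint.def'
    exact h1.mono_set Ioo_subset_Ioc_self
  rw [← MeasureTheory.ofReal_integral_eq_lintegral_ofReal hIoo ?_]
  · congr 1
    have hpull : ∫ x in (0:ℝ)..A, p * x^(p-1) = p * ∫ x in (0:ℝ)..A, x^(p-1) :=
      intervalIntegral.integral_const_mul p _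
    have hrpow : ∫ x in (0:ℝ)..A, x^(p-1) = (A^(p-1+1) - 0^(p-1+1))/(p-1+1) :=
      integral_rpow (Or.inl (by linarith))
    rw [← MeasureTheory.integral_Ioc_eq_integral_Ioo, ← intervalIntegral.integral_of_le hA,
      hpull, hrpow]
    rw [Real.zero_rpow (by linarith : p - 1 + 1 ≠ 0), show p - 1 + 1 = p by ring, sub_zero]
    field_simp
  · filter_upwards [ae_restrict_mem measurableSet_Ioo] with s hs
    have hs0 : (0:ℝ) < s := hs.1
    positivity

lemma pow_id {p : ℝ} (hp : 0 < p) (a : ℝ≥0∞) :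
    a ^ p = ∫⁻ s in Ioi (0:ℝ),
      (if ENNReal.ofReal s < a then ENNReal.ofReal (p * s^(p-1)) else 0) := by
  rcases eq_or_ne a ⊤ with rfl | ha
  · have he : ∀ s : ℝ, (if ENNReal.ofReal s < (⊤:ℝ≥0∞)
        then ENNReal.ofReal (p * s^(p-1)) else 0) = ENNReal.ofReal (p * s^(p-1)) :=
      fun s => if_pos ofReal_lt_top
    simp only [he]
    rw [ENNReal.top_rpow_of_pos hp]
    set I := ∫⁻ s in Ioi (0:ℝ), ENNReal.ofReal (p * s^(p-1)) with hI
    by_contra hne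
    have hItop : I ≠ ⊤ := fun h => hne h.symm
    have hn : ∀ n : ℕ, ENNReal.ofReal ((n:ℝ)^p) ≤ I := by
      intro n
      rw [← base_int hp (Nat.cast_nonneg n)]
      exact lintegral_mono_set Ioo_subset_Ioi_self
    obtain ⟨n, hn'⟩ := exists_nat_ge ((I.toReal + 1)^(1/p))
    have hbase : (0:ℝ) ≤ I.toReal + 1 := by positivity
    have h1 : I.toReal + 1 ≤ (n:ℝ)^p := by
      calc I.toReal + 1 = ((I.toReal + 1)^(1/p))^p := by
            rw [← Real.rpow_mul hbase, one_div_mul_cancel hp.ne', Real.rpow_one]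
        _ ≤ (n:ℝ)^p := Real.rpow_le_rpow (Real.rpow_nonneg hbase _) hn' hp.le
    have h2 : (n:ℝ)^p ≤ I.toReal := (ENNReal.ofReal_le_iff_le_toReal hItop).mp (hn n)
    linarith
  · set A := a.toReal with hAdef
    have hA0 : 0 ≤ A := toReal_nonneg
    have hcongr : ∫⁻ s in Ioi (0:ℝ),
        (if ENNReal.ofReal s < a then ENNReal.ofReal (p * s^(p-1)) else 0)
        = ∫⁻ s in Ioi (0:ℝ), (Ioo (0:ℝ) A).indicator
            (fun s => ENNReal.ofReal (p * s^(p-1))) s := by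
      refine setLIntegral_congr_fun measurableSet_Ioi (fun s hs => ?_)
      by_cases hsA : s < A
      · rw [if_pos ((ENNReal.ofReal_lt_iff_lt_toReal (le_of_lt hs) ha).mpr hsA),
          indicator_of_mem (mem_Ioo.mpr ⟨hs, hsA⟩)]
      · rw [if_neg (fun h => hsA ((ENNReal.ofReal_lt_iff_lt_toReal (le_of_lt hs) ha).mp h)),
          indicator_of_notMem (fun h => hsA h.2)]
    rw [hcongr, lintegral_indicator measurableSet_Ioo, Measure.restrict_restrict measurableSet_Ioo]
    rw [show Ioo (0:ℝ) A ∩ Ioi 0 = Ioo 0 A from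
      inter_eq_left.mpr (fun s hs => hs.1)]
    rw [base_int hp hA0]
    conv_lhs => rw [← ofReal_toReal ha]
    rw [ENNReal.ofReal_rpow_of_nonneg hA0 hp.le]
lemma rpow_self_mul {a : ℝ≥0∞} {q : ℝ} (hq : 0 < q) (hq1 : 0 < q + 1) :
    a ^ q * a = a ^ (q + 1) := by
  rcases eq_or_ne a 0 with rfl | h0
  · rw [ENNReal.zero_rpow_of_pos hq, ENNReal.zero_rpow_of_pos hq1, zero_mul]
  rcases eq_or_ne a ⊤ with rfl | htop
  · rw [ENNReal.top_rpow_of_pos hq, ENNReal.top_rpow_of_pos hq1, top_mul_top]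
  · rw [ENNReal.rpow_add q 1 h0 htop, ENNReal.rpow_one]

/-- Fefferman–Stein weighted maximal inequality:
`∫ (Mf)^r |φ| ≤ C_r ∫ |f|^r Mφ` for `1 < r < ∞`. -/
theorem stmt9 (r : ℝ) (hr : 1 < r) :
    ∃ C : ℝ, 0 < C ∧ ∀ f φ : AddCircle (1:ℝ) → ℂ, Measurable f → Measurable φ →
      ∫⁻ x : AddCircle (1:ℝ), (maxFn f x) ^ r * (‖φ x‖₊ : ENNReal) ≤
        ENNReal.ofReal C * ∫⁻ x : AddCircle (1:ℝ), (‖f x‖₊ : ENNReal) ^ r * maxFn φ x := by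
  have hr0 : (0:ℝ) < r := by linarith
  have hr1 : (0:ℝ) < r - 1 := by linarith
  have hC2 : (0:ℝ) < 2*r/(r-1) := div_pos (by linarith) (by linarith)
  have hC3 : (0:ℝ) < (2:ℝ)^(r-1) := Real.rpow_pos_of_pos two_pos _
  refine ⟨5 * (2*r/(r-1)) * 2^(r-1), by positivity, ?_⟩
  intro f φ hf hφ
  have hu : Measurable (fun y : 𝕋 => (‖f y‖₊ : ℝ≥0∞)) := hf.nnnorm.coe_nnreal_ennreal
  have hw : Measurable (fun y : 𝕋 => (‖φ y‖₊ : ℝ≥0∞)) := hφ.nnnorm.coe_nnreal_ennreal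
  set u : 𝕋 → ℝ≥0∞ := fun y => (‖f y‖₊ : ℝ≥0∞)
  set w : 𝕋 → ℝ≥0∞ := fun y => (‖φ y‖₊ : ℝ≥0∞)
  have hMBu : Measurable (MB u) := measurable_MB u
  have hMBw : Measurable (MB w) := measurable_MB w
  have hwtop : ∀ x, w x ≠ ⊤ := fun x => coe_ne_top
  have hgoal1 : (∫⁻ x : 𝕋, (maxFn f x) ^ r * (‖φ x‖₊ : ENNReal))
      = ∫⁻ x : 𝕋, (MB u x) ^ r * w x := rfl
  have hgoal2 : (∫⁻ x : 𝕋, (‖f x‖₊ : ENNReal) ^ r * maxFn φ x)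
      = ∫⁻ x : 𝕋, u x ^ r * MB w x := rfl
  rw [hgoal1, hgoal2]
  calc ∫⁻ x : 𝕋, (MB u x) ^ r * w x
      = ∫⁻ x : 𝕋, ∫⁻ s in Ioi (0:ℝ),
          (if ENNReal.ofReal s < MB u x then ENNReal.ofReal (r * s^(r-1)) else 0) * w x := by
        refine lintegral_congr fun x => ?_
        rw [pow_id hr0 (MB u x)]
        exact (lintegral_mul_const' (w x) _ (hwtop x)).symm
    _ = ∫⁻ s in Ioi (0:ℝ), ∫⁻ x : 𝕋,
          (if ENNReal.ofReal s < MB u x then ENNReal.ofReal (r * s^(r-1)) else 0) * w x := by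
        refine lintegral_lintegral_swap ?_
        have hmeas : Measurable (fun p : 𝕋 × ℝ =>
            (if ENNReal.ofReal p.2 < MB u p.1 then ENNReal.ofReal (r * p.2^(r-1)) else 0)
              * w p.1) := by
          refine Measurable.mul ?_ (hw.comp measurable_fst)
          refine Measurable.ite ?_ ?_ measurable_const
          · exact measurableSet_lt (ENNReal.measurable_ofReal.comp measurable_snd)
              (hMBu.comp measurable_fst)
          · exact (measurable_const.mul
              ((measurable_rpow_const (r-1)).comp measurable_snd)).ennreal_ofReal
        exact hmeas.aemeasurable
    _ = ∫⁻ s in Ioi (0:ℝ), ENNReal.ofReal (r * s^(r-1)) *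
          ∫⁻ x in {x : 𝕋 | ENNReal.ofReal s < MB u x}, w x := by
        refine lintegral_congr fun s => ?_
        rw [← lintegral_const_mul' _ _ ofReal_ne_top,
          ← lintegral_indicator (measurableSet_lt measurable_const hMBu)]
        refine lintegral_congr fun x => ?_
        simp only [Set.indicator_apply, mem_setOf_eq]
        by_cases h : ENNReal.ofReal s < MB u x
        · rw [if_pos h, if_pos h]
        · rw [if_neg h, if_neg h, zero_mul]
    _ ≤ ∫⁻ s in Ioi (0:ℝ), 5 * (ENNReal.ofReal (2*r*s^(r-2)) *
          ∫⁻ y : 𝕋, (if ENNReal.ofReal (s/2) < u y then u y * MB w y else 0)) := by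
        refine lintegral_mono_ae ?_
        filter_upwards [ae_restrict_mem measurableSet_Ioi] with s hs
        have hs0 : (0:ℝ) < s := hs
        set t₀ := ENNReal.ofReal (s/2) with ht₀
        have ht₀0 : t₀ ≠ 0 := by
          rw [ht₀, ne_eq, ENNReal.ofReal_eq_zero, not_le]
          linarith
        have ht₀top : t₀ ≠ ⊤ := ofReal_ne_top
        set u1 : 𝕋 → ℝ≥0∞ := fun y => if t₀ < u y then u y else 0 with hu1
        have hu1m : Measurable u1 :=
          Measurable.ite (measurableSet_lt measurable_const hu) hu measurable_const
        have hsubset : {x : 𝕋 | ENNReal.ofReal s < MB u x} ⊆ {x : 𝕋 | t₀ < MB u1 x} := by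
          intro x hx
          simp only [mem_setOf_eq] at hx ⊢
          by_contra hcon
          push_neg at hcon
          have hsplit : u = fun y => u1 y + (if t₀ < u y then 0 else u y) := by
            funext y
            by_cases h : t₀ < u y <;> simp [hu1, h]
          have hle : MB u x ≤ MB u1 x + t₀ := by
            calc MB u x = MB (fun y => u1 y + (if t₀ < u y then 0 else u y)) x := by
                  rw [← hsplit]
              _ ≤ MB u1 x + MB (fun y => if t₀ < u y then 0 else u y) x :=
                  MB_add_le _ _ hu1m x
              _ ≤ MB u1 x + t₀ := by
                  refine add_le_add le_rfl (MB_const_bound _ x fun y => ?_)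
                  by_cases h : t₀ < u y
                  · simp [h]
                  · simpa [h] using le_of_not_gt h
          have hcontr : MB u x ≤ ENNReal.ofReal s := by
            calc MB u x ≤ MB u1 x + t₀ := hle
              _ ≤ t₀ + t₀ := add_le_add hcon le_rfl
              _ = ENNReal.ofReal s := by
                  rw [ht₀, ← ENNReal.ofReal_add (by linarith) (by linarith)]
                  norm_num
          exact absurd hx (not_lt.mpr hcontr)
        have hconst : ENNReal.ofReal (r * s^(r-1)) * t₀⁻¹ = ENNReal.ofReal (2*r*s^(r-2)) := by
          rw [ht₀, ← div_eq_mul_inv, ← ENNReal.ofReal_div_of_pos (by linarith)]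
          congr 1
          rw [show r - 1 = (r-2) + 1 by ring, Real.rpow_add_one hs0.ne']
          field_simp
        have hiteq : ∀ y : 𝕋, u1 y * MB w y
            = (if ENNReal.ofReal (s/2) < u y then u y * MB w y else 0) := by
          intro y
          rw [hu1, ← ht₀]
          by_cases h : t₀ < u y <;> simp [h]
        calc ENNReal.ofReal (r * s^(r-1)) * ∫⁻ x in {x : 𝕋 | ENNReal.ofReal s < MB u x}, w x
            ≤ ENNReal.ofReal (r * s^(r-1)) * ∫⁻ x in {x : 𝕋 | t₀ < MB u1 x}, w x :=
              mul_le_mul_right (lintegral_mono_set hsubset) _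
          _ = ENNReal.ofReal (r * s^(r-1)) *
                (t₀⁻¹ * (t₀ * ∫⁻ x in {x : 𝕋 | t₀ < MB u1 x}, w x)) := by
              rw [← mul_assoc t₀⁻¹, ENNReal.inv_mul_cancel ht₀0 ht₀top, one_mul]
          _ ≤ ENNReal.ofReal (r * s^(r-1)) * (t₀⁻¹ * (5 * ∫⁻ y, u1 y * MB w y)) :=
              mul_le_mul_right (mul_le_mul_right (weak u1 w hu1m t₀) _) _
          _ = 5 * ((ENNReal.ofReal (r * s^(r-1)) * t₀⁻¹) * ∫⁻ y, u1 y * MB w y) := by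
              ring
          _ = 5 * (ENNReal.ofReal (2*r*s^(r-2)) *
                ∫⁻ y : 𝕋, (if ENNReal.ofReal (s/2) < u y then u y * MB w y else 0)) := by
              rw [hconst]
              congr 2
              exact lintegral_congr hiteq
    _ = 5 * ∫⁻ s in Ioi (0:ℝ), ENNReal.ofReal (2*r*s^(r-2)) *
          ∫⁻ y : 𝕋, (if ENNReal.ofReal (s/2) < u y then u y * MB w y else 0) :=
        lintegral_const_mul' 5 _ (by norm_num)
    _ = 5 * ∫⁻ s in Ioi (0:ℝ), ∫⁻ y : 𝕋,
          (if ENNReal.ofReal (s/2) < u y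
            then ENNReal.ofReal (2*r*s^(r-2)) * (u y * MB w y) else 0) := by
        congr 1
        refine lintegral_congr fun s => ?_
        rw [← lintegral_const_mul' _ _ ofReal_ne_top]
        refine lintegral_congr fun y => ?_
        by_cases h : ENNReal.ofReal (s/2) < u y <;> simp [h]
    _ = 5 * ∫⁻ y : 𝕋, ∫⁻ s in Ioi (0:ℝ),
          (if ENNReal.ofReal (s/2) < u y
            then ENNReal.ofReal (2*r*s^(r-2)) * (u y * MB w y) else 0) := by
        congr 1
        refine lintegral_lintegral_swap ?_
        have hmeas : Measurable (fun p : ℝ × 𝕋 =>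
            (if ENNReal.ofReal (p.1/2) < u p.2
              then ENNReal.ofReal (2*r*p.1^(r-2)) * (u p.2 * MB w p.2) else 0)) := by
          refine Measurable.ite ?_ ?_ measurable_const
          · exact measurableSet_lt
              (ENNReal.measurable_ofReal.comp ((measurable_fst).div_const 2))
              (hu.comp measurable_snd)
          · exact ((measurable_const.mul
              ((measurable_rpow_const (r-2)).comp measurable_fst)).ennreal_ofReal).mul
              ((hu.comp measurable_snd).mul (hMBw.comp measurable_snd))
        exact hmeas.aemeasurable
    _ = 5 * ∫⁻ y : 𝕋, (ENNReal.ofReal (2*r/(r-1)) * (2 * u y)^(r-1)) * (u y * MB w y) := by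
        congr 1
        refine lintegral_congr fun y => ?_
        have hiff : ∀ s : ℝ, (ENNReal.ofReal (s/2) < u y) ↔ (ENNReal.ofReal s < 2 * u y) := by
          intro s
          have h2 : ENNReal.ofReal s = 2 * ENNReal.ofReal (s/2) := by
            rw [show (2:ℝ≥0∞) = ENNReal.ofReal 2 by norm_num,
              ← ENNReal.ofReal_mul (by norm_num : (0:ℝ) ≤ 2)]
            norm_num
            rw [← ENNReal.ofReal_ofNat 2, ← ENNReal.ofReal_mul (by norm_num)]; congr 1; ring
          rw [h2]
          exact (ENNReal.mul_lt_mul_iff_right two_ne_zero ENNReal.ofNat_ne_top).symm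
        have e1 : ∀ s : ℝ, (if ENNReal.ofReal (s/2) < u y
              then ENNReal.ofReal (2*r*s^(r-2)) * (u y * MB w y) else 0)
            = (if ENNReal.ofReal s < 2 * u y then ENNReal.ofReal (2*r*s^(r-2)) else 0)
                * (u y * MB w y) := by
          intro s
          by_cases h : ENNReal.ofReal (s/2) < u y
          · rw [if_pos h, if_pos ((hiff s).mp h)]
          · rw [if_neg h, if_neg (fun hh => h ((hiff s).mpr hh)), zero_mul]
        simp only [e1]
        rw [lintegral_mul_const'' _ (Measurable.aemeasurable (by
          refine Measurable.ite ?_ ?_ measurable_const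
          · exact measurableSet_lt ENNReal.measurable_ofReal measurable_const
          · exact (measurable_const.mul (measurable_rpow_const (r-2))).ennreal_ofReal))]
        congr 1
        have e2 : ∀ s : ℝ, (if ENNReal.ofReal s < 2 * u y
              then ENNReal.ofReal (2*r*s^(r-2)) else 0)
            = ENNReal.ofReal (2*r/(r-1)) *
              (if ENNReal.ofReal s < 2 * u y
                then ENNReal.ofReal ((r-1) * s^((r-1)-1)) else 0) := by
          intro s
          by_cases h : ENNReal.ofReal s < 2 * u y
          · rw [if_pos h, if_pos h, ← ENNReal.ofReal_mul hC2.le]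
            congr 1
            rw [show (r-1)-1 = r-2 by ring]
            field_simp
          · simp [h]
        simp only [e2]
        rw [lintegral_const_mul' _ _ ofReal_ne_top, ← pow_id hr1 (2 * u y)]
    _ = 5 * ∫⁻ y : 𝕋, (ENNReal.ofReal (2*r/(r-1)) * ENNReal.ofReal (2^(r-1)))
          * (u y ^ r * MB w y) := by
        congr 1
        refine lintegral_congr fun y => ?_
        have h2u : (2 * u y)^(r-1) = ENNReal.ofReal (2^(r-1)) * u y ^ (r-1) := by
          rw [ENNReal.mul_rpow_of_nonneg _ _ (by linarith : (0:ℝ) ≤ r-1)]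
          congr 1
          rw [show (2:ℝ≥0∞) = ENNReal.ofReal 2 by norm_num,
            ENNReal.ofReal_rpow_of_nonneg (by norm_num : (0:ℝ) ≤ 2) (by linarith : (0:ℝ) ≤ r-1)]
        rw [h2u]
        have hself : u y ^ (r-1) * u y = u y ^ r := by
          rw [rpow_self_mul hr1 (by linarith : (0:ℝ) < (r-1)+1), show r-1+1 = r by ring]
        calc (ENNReal.ofReal (2*r/(r-1)) * (ENNReal.ofReal (2^(r-1)) * u y ^ (r-1)))
              * (u y * MB w y)
            = (ENNReal.ofReal (2*r/(r-1)) * ENNReal.ofReal (2^(r-1)))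
              * ((u y ^ (r-1) * u y) * MB w y) := by ring
          _ = (ENNReal.ofReal (2*r/(r-1)) * ENNReal.ofReal (2^(r-1)))
              * (u y ^ r * MB w y) := by rw [hself]
    _ = ENNReal.ofReal (5 * (2*r/(r-1)) * 2^(r-1)) * ∫⁻ x : 𝕋, u x ^ r * MB w x := by
        rw [lintegral_const_mul' _ _ (ENNReal.mul_ne_top ofReal_ne_top ofReal_ne_top),
          ← mul_assoc]
        congr 1
        rw [ENNReal.ofReal_mul (by positivity : (0:ℝ) ≤ 5 * (2*r/(r-1))),
          ENNReal.ofReal_mul (by norm_num : (0:ℝ) ≤ 5),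
          show ENNReal.ofReal 5 = 5 by norm_num, mul_assoc]
end

section
/- (Dualization of weak-$L^p$, sufficiency direction) Fix $0 < p < \infty$ and $f : \mathbb{T} \to \mathbb{C}$ integrable on every finite-measure set. Suppose there is $A > 0$ such that for every measurable set $E \subseteq \mathbb{T}$ with $|E| > 0$ there exists a measurable subset $E' \subseteq E$ with $|E'| > |E|/2$ and $|\int_{E'} f \, dm| \le A |E|^{1-1/p}$. Then $\|f\|_{p,\infty} \le 2^{3/2 + 2/p} A$. -/
open MeasureTheory

private lemma aux2 (p : ℝ) (hp : 0 < p) (f : AddCircle (1:ℝ) → ℂ) (A : ℝ) (hA : 0 < A)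
    (h : ∀ E : Set (AddCircle (1:ℝ)), MeasurableSet E → 0 < volume E →
      ∃ E' : Set (AddCircle (1:ℝ)), E' ⊆ E ∧ MeasurableSet E' ∧
        volume E / 2 < volume E' ∧
        ‖∫ x in E', f x‖ ≤ A * (volume E).toReal ^ (1 - 1/p))
    (lam : ℝ) (hlam : 0 < lam) (tE : ℝ) (htE : 0 < tE)
    (F : Set (AddCircle (1:ℝ))) (hFm : MeasurableSet F)
    (u : AddCircle (1:ℝ) → ℝ) (hu : Integrable u)
    (hlb : ∀ x ∈ F, lam / Real.sqrt 2 ≤ u x)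
    (hcomp : ∀ s : Set (AddCircle (1:ℝ)), MeasurableSet s →
      |∫ x in s, u x| ≤ ‖∫ x in s, f x‖)
    (hE4 : tE ≤ 4 * (volume F).toReal) :
    lam * tE ^ (1/p) ≤ 2 ^ ((3:ℝ)/2 + 2/p) * A := by
  set c : ℝ := lam / Real.sqrt 2 with hc_def
  have hc : 0 < c := div_pos hlam (Real.sqrt_pos.mpr two_pos)
  have htF : 0 < (volume F).toReal := by linarith
  have hFpos : 0 < volume F := by
    rcases (ENNReal.toReal_pos_iff.mp htF) with ⟨h1, _⟩; exact h1
  obtain ⟨F', hsub, hF'm, hhalf, hbound⟩ := h F hFm hFpos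
  set t : ℝ := (volume F).toReal with ht_def
  set t' : ℝ := (volume F').toReal with ht'_def
  have hF'fin : volume F' ≠ ⊤ := measure_ne_top _ _
  have ht' : t / 2 ≤ t' := by
    have : (volume F / 2).toReal ≤ t' :=
      ENNReal.toReal_mono hF'fin hhalf.le
    simpa [ENNReal.toReal_div] using this
  -- lower bound on the integral of u over F'
  have h1 : c * t' ≤ ∫ x in F', u x := by
    have : ∫ _ in F', c ≤ ∫ x in F', u x := by
      apply setIntegral_mono_on (integrableOn_const hF'fin)
        hu.integrableOn hF'm
      exact fun x hx => hlb x (hsub hx)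
    calc c * t' = ∫ _ in F', c := by
          rw [setIntegral_const]; ring_nf; rfl
      _ ≤ _ := this
  have h2 : c * t' ≤ A * t ^ (1 - 1/p) := by
    calc c * t' ≤ |∫ x in F', u x| := le_trans h1 (le_abs_self _)
      _ ≤ ‖∫ x in F', f x‖ := hcomp F' hF'm
      _ ≤ A * t ^ (1 - 1/p) := hbound
  have h3 : c * (t / 2) ≤ A * t ^ (1 - 1/p) := by
    have := mul_le_mul_of_nonneg_left ht' hc.le
    linarith
  -- divide by t^(1-1/p)
  have htp : (0:ℝ) < t ^ (1 - 1/p) := Real.rpow_pos_of_pos htF _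
  have hsplit : t = t ^ (1 - 1/p) * t ^ (1/p) := by
    rw [← Real.rpow_add htF, sub_add_cancel, Real.rpow_one]
  have h4 : c * t ^ (1/p) / 2 ≤ A := by
    have h3' : (c * t ^ (1/p) / 2) * t ^ (1 - 1/p) ≤ A * t ^ (1 - 1/p) := by
      calc (c * t ^ (1/p) / 2) * t ^ (1 - 1/p)
          = c * ((t ^ (1 - 1/p) * t ^ (1/p)) / 2) := by ring
        _ = c * (t / 2) := by rw [← hsplit]
        _ ≤ A * t ^ (1 - 1/p) := h3
    exact le_of_mul_le_mul_right h3' htp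
  -- so lam * t^(1/p) ≤ 2√2 A
  have hsqrt2 : Real.sqrt 2 = (2:ℝ) ^ ((1:ℝ)/2) := Real.sqrt_eq_rpow 2
  have h5 : lam * t ^ (1/p) ≤ 2 ^ ((3:ℝ)/2) * A := by
    have hs : (0:ℝ) < Real.sqrt 2 := Real.sqrt_pos.mpr two_pos
    have : lam * t ^ (1/p) ≤ 2 * Real.sqrt 2 * A := by
      rw [hc_def, div_mul_eq_mul_div, div_div] at h4
      rw [div_le_iff₀ (by positivity)] at h4
      nlinarith
    calc lam * t ^ (1/p) ≤ 2 * Real.sqrt 2 * A := this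
      _ = 2 ^ ((3:ℝ)/2) * A := by
          rw [show (3:ℝ)/2 = 1 + 1/2 by norm_num, Real.rpow_add two_pos,
            Real.rpow_one, hsqrt2]
  -- combine with tE ≤ 4 t
  have h6 : tE ^ (1/p) ≤ 2 ^ ((2:ℝ)/p) * t ^ (1/p) := by
    have h4t : tE ^ (1/p) ≤ (4 * t) ^ (1/p) :=
      Real.rpow_le_rpow htE.le hE4 (by positivity)
    have h42 : (4:ℝ) = 2 ^ (2:ℝ) := by
      have := Real.rpow_natCast (2:ℝ) 2
      norm_num at this
      linarith
    have : (4 * t) ^ (1/p) = 2 ^ ((2:ℝ)/p) * t ^ (1/p) := by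
      rw [Real.mul_rpow (by norm_num) htF.le, h42, ← Real.rpow_mul two_pos.le,
        show (2:ℝ) * (1/p) = 2/p by ring]
    linarith [this ▸ h4t]
  calc lam * tE ^ (1/p) ≤ lam * (2 ^ ((2:ℝ)/p) * t ^ (1/p)) :=
        mul_le_mul_of_nonneg_left h6 hlam.le
    _ = 2 ^ ((2:ℝ)/p) * (lam * t ^ (1/p)) := by ring
    _ ≤ 2 ^ ((2:ℝ)/p) * (2 ^ ((3:ℝ)/2) * A) := by
        gcongr
    _ = 2 ^ ((3:ℝ)/2 + 2/p) * A := by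
        rw [Real.rpow_add two_pos]
        ring

/-- Dualization of weak-`L^p` (sufficiency direction): if for every positive-measure
set `E ⊆ 𝕋` there is `E' ⊆ E` with `|E'| > |E|/2` and `|∫_{E'} f| ≤ A |E|^{1-1/p}`,
then `‖f‖_{p,∞} ≤ 2^{3/2+2/p} A`. -/
theorem stmt12 (p : ℝ) (hp : 0 < p) (f : AddCircle (1:ℝ) → ℂ) (hf : Integrable f)
    (A : ℝ) (hA : 0 < A)
    (h : ∀ E : Set (AddCircle (1:ℝ)), MeasurableSet E → 0 < volume E →
      ∃ E' : Set (AddCircle (1:ℝ)), E' ⊆ E ∧ MeasurableSet E' ∧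
        volume E / 2 < volume E' ∧
        ‖∫ x in E', f x‖ ≤ A * (volume E).toReal ^ (1 - 1/p)) :
    ∀ lam : ℝ, 0 < lam →
      lam * (volume {x : AddCircle (1:ℝ) | lam < ‖f x‖}).toReal ^ (1/p) ≤
        2 ^ ((3:ℝ)/2 + 2/p) * A := by
  intro lam hlam
  have hRHS : (0:ℝ) ≤ 2 ^ ((3:ℝ)/2 + 2/p) * A := by positivity
  -- measurable representative
  set g : AddCircle (1:ℝ) → ℂ := hf.1.mk f with hg_def
  have hgm : StronglyMeasurable g := hf.1.stronglyMeasurable_mk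
  have hfg : f =ᵐ[volume] g := hf.1.ae_eq_mk
  have hg : Integrable g := hf.congr hfg
  have hgmeas : Measurable g := hgm.measurable
  set E : Set (AddCircle (1:ℝ)) := {x | lam < ‖g x‖} with hE_def
  have hEm : MeasurableSet E := measurableSet_lt measurable_const hgmeas.norm
  have hvol : volume {x : AddCircle (1:ℝ) | lam < ‖f x‖} = volume E := by
    apply measure_congr
    filter_upwards [hfg] with x hx
    show (lam < ‖f x‖) = (lam < ‖g x‖)
    rw [hx]
  rw [hvol]
  rcases eq_or_lt_of_le (zero_le : (0:ENNReal) ≤ volume E) with hE0 | hEpos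
  · rw [← hE0]
    simp only [ENNReal.toReal_zero]
    rw [Real.zero_rpow (by positivity : (1:ℝ)/p ≠ 0), mul_zero]
    exact hRHS
  set c : ℝ := lam / Real.sqrt 2 with hc_def
  set F1 : Set (AddCircle (1:ℝ)) := E ∩ {x | c < (g x).re} with hF1
  set F2 : Set (AddCircle (1:ℝ)) := E ∩ {x | (g x).re < -c} with hF2
  set F3 : Set (AddCircle (1:ℝ)) := E ∩ {x | c < (g x).im} with hF3
  set F4 : Set (AddCircle (1:ℝ)) := E ∩ {x | (g x).im < -c} with hF4
  have hF1m : MeasurableSet F1 := hEm.inter (measurableSet_lt measurable_const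
    (Complex.measurable_re.comp hgmeas))
  have hF2m : MeasurableSet F2 := hEm.inter (measurableSet_lt
    (Complex.measurable_re.comp hgmeas) measurable_const)
  have hF3m : MeasurableSet F3 := hEm.inter (measurableSet_lt measurable_const
    (Complex.measurable_im.comp hgmeas))
  have hF4m : MeasurableSet F4 := hEm.inter (measurableSet_lt
    (Complex.measurable_im.comp hgmeas) measurable_const)
  have hcover : E ⊆ F1 ∪ F2 ∪ F3 ∪ F4 := by
    intro x hx
    have hx' : lam < ‖g x‖ := hx
    have hb : ‖g x‖ ≤ Real.sqrt 2 * max |(g x).re| |(g x).im| :=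
      Complex.norm_le_sqrt_two_mul_max (g x)
    have hs : (0:ℝ) < Real.sqrt 2 := Real.sqrt_pos.mpr two_pos
    have hmax : c < max |(g x).re| |(g x).im| := by
      rw [hc_def, div_lt_iff₀ hs, mul_comm]
      exact lt_of_lt_of_le hx' hb
    rcases lt_max_iff.mp hmax with hre | him
    · rcases lt_abs.mp hre with h1 | h1
      · exact Or.inl (Or.inl (Or.inl ⟨hx, h1⟩))
      · exact Or.inl (Or.inl (Or.inr ⟨hx, lt_neg.mp h1⟩))
    · rcases lt_abs.mp him with h1 | h1
      · exact Or.inl (Or.inr ⟨hx, h1⟩)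
      · exact Or.inr ⟨hx, lt_neg.mp h1⟩
  -- toReal quantities
  set tE : ℝ := (volume E).toReal with htE_def
  have htEpos : 0 < tE := ENNReal.toReal_pos hEpos.ne' (measure_ne_top _ _)
  have hsum : volume E ≤ volume F1 + volume F2 + volume F3 + volume F4 := by
    calc volume E ≤ volume (F1 ∪ F2 ∪ F3 ∪ F4) := measure_mono hcover
      _ ≤ volume (F1 ∪ F2 ∪ F3) + volume F4 := measure_union_le _ _
      _ ≤ volume (F1 ∪ F2) + volume F3 + volume F4 := by
          gcongr; exact measure_union_le _ _
      _ ≤ volume F1 + volume F2 + volume F3 + volume F4 := by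
          gcongr; exact measure_union_le _ _
  have hsumR : tE ≤ (volume F1).toReal + (volume F2).toReal
      + (volume F3).toReal + (volume F4).toReal := by
    have hfin : ∀ s : Set (AddCircle (1:ℝ)), volume s ≠ ⊤ :=
      fun s => measure_ne_top _ _
    have := ENNReal.toReal_mono (by
      simp [ENNReal.add_ne_top, hfin]) hsum
    rwa [ENNReal.toReal_add (by simp [ENNReal.add_ne_top, hfin]) (hfin _),
      ENNReal.toReal_add (by simp [ENNReal.add_ne_top, hfin]) (hfin _),
      ENNReal.toReal_add (hfin _) (hfin _)] at this
  -- integral comparison facts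
  have hint : ∀ s : Set (AddCircle (1:ℝ)), MeasurableSet s →
      ∫ x in s, f x = ∫ x in s, g x := by
    intro s hs
    exact setIntegral_congr_ae hs (hfg.mono fun x hx _ => hx)
  have hre_comp : ∀ s : Set (AddCircle (1:ℝ)), MeasurableSet s →
      |∫ x in s, (g x).re| ≤ ‖∫ x in s, f x‖ := by
    intro s hs
    rw [hint s hs]
    simp only [← RCLike.re_to_complex]
    rw [integral_re hg.integrableOn]
    exact RCLike.abs_re_le_norm _
  have him_comp : ∀ s : Set (AddCircle (1:ℝ)), MeasurableSet s →
      |∫ x in s, (g x).im| ≤ ‖∫ x in s, f x‖ := by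
    intro s hs
    rw [hint s hs]
    simp only [← RCLike.im_to_complex]
    rw [integral_im hg.integrableOn]
    exact RCLike.abs_im_le_norm _
  have hure : Integrable (fun x => (g x).re) := hg.re
  have huim : Integrable (fun x => (g x).im) := hg.im
  -- one of the four sets has measure ≥ tE/4, giving tE ≤ 4 * t_i
  by_contra hcon
  push_neg at hcon
  -- each set must satisfy tE > 4 * vol
  have hcase : ∀ (F : Set (AddCircle (1:ℝ))), MeasurableSet F →
      (u : AddCircle (1:ℝ) → ℝ) → Integrable u →
      (∀ x ∈ F, c ≤ u x) →
      (∀ s : Set (AddCircle (1:ℝ)), MeasurableSet s →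
        |∫ x in s, u x| ≤ ‖∫ x in s, f x‖) →
      (volume F).toReal < tE / 4 := by
    intro F hFm u hu hlb hcomp
    by_contra hge
    push_neg at hge
    exact absurd (aux2 p hp f A hA h lam hlam tE htEpos F hFm u hu hlb hcomp
      (by linarith)) (not_le.mpr hcon)
  have c1 : (volume F1).toReal < tE / 4 :=
    hcase F1 hF1m _ hure (fun x hx => (hx.2 : c < (g x).re).le) hre_comp
  have c2 : (volume F2).toReal < tE / 4 := by
    refine hcase F2 hF2m (fun x => -(g x).re) hure.neg
      (fun x hx => by
        have h2x : (g x).re < -c := hx.2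
        linarith) ?_
    intro s hs
    rw [integral_neg, abs_neg]
    exact hre_comp s hs
  have c3 : (volume F3).toReal < tE / 4 :=
    hcase F3 hF3m _ huim (fun x hx => (hx.2 : c < (g x).im).le) him_comp
  have c4 : (volume F4).toReal < tE / 4 := by
    refine hcase F4 hF4m (fun x => -(g x).im) huim.neg
      (fun x hx => by
        have h2x : (g x).im < -c := hx.2
        linarith) ?_
    intro s hs
    rw [integral_neg, abs_neg]
    exact him_comp s hs
  linarith
end

section
/- Let $(X,\rho)$ be a measure space and $\Psi : [0,\infty) \to [0,\infty)$ continuous and increasing with $\Psi(0) = 0$. Then for any measurable $f : X \to \mathbb{C}$, $\int_X \Psi(|f|) \, d\rho = \int_0^\infty \Psi(f^*(t)) \, dt$, where $f^*$ is the decreasing rearrangement of $f$. -/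
open MeasureTheory Set

/-- ENNReal-valued layer cake formula for arbitrary measures. -/
lemma layercake_ennreal {α : Type*} [MeasurableSpace α] (μ : Measure α)
    (h : α → ENNReal) (hm : Measurable h) :
    ∫⁻ x, h x ∂μ = ∫⁻ u in Set.Ioi (0:ℝ), μ {x | ENNReal.ofReal u < h x} := by
  rcases eq_or_ne (μ {x | h x = ⊤}) 0 with hA | hA
  · have hae : ∀ᵐ x ∂μ, h x ≠ ⊤ := by rw [ae_iff]; simpa using hA
    have hr : Measurable fun x => (h x).toReal := hm.ennreal_toReal
    have h1 : ∫⁻ x, h x ∂μ = ∫⁻ x, ENNReal.ofReal ((h x).toReal) ∂μ := by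
      apply lintegral_congr_ae
      filter_upwards [hae] with x hx
      rw [ENNReal.ofReal_toReal hx]
    rw [h1, lintegral_eq_lintegral_meas_lt μ
      (Filter.Eventually.of_forall fun x => ENNReal.toReal_nonneg) hr.aemeasurable]
    apply setLIntegral_congr_fun measurableSet_Ioi
    intro u hu
    apply measure_congr
    filter_upwards [hae] with x hx
    simp only [eq_iff_iff, Set.mem_setOf_eq]
    exact (ENNReal.ofReal_lt_iff_lt_toReal (le_of_lt hu) hx).symm
  · have lhs : ∫⁻ x, h x ∂μ = ⊤ := by
      refine top_le_iff.mp ?_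
      calc (⊤ : ENNReal) = ⊤ * μ {x | h x = ⊤} := (ENNReal.top_mul hA).symm
        _ = ∫⁻ _ in {x | h x = ⊤}, ⊤ ∂μ := (setLIntegral_const _ _).symm
        _ = ∫⁻ x in {x | h x = ⊤}, h x ∂μ := by
            refine (setLIntegral_congr_fun (hm (measurableSet_singleton ⊤)) ?_).symm
            exact fun x hx => hx
        _ ≤ ∫⁻ x, h x ∂μ := setLIntegral_le_lintegral _ _
    have rhs : ∫⁻ u in Set.Ioi (0:ℝ), μ {x | ENNReal.ofReal u < h x} = ⊤ := by
      refine top_le_iff.mp ?_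
      calc (⊤ : ENNReal) = μ {x | h x = ⊤} * volume (Set.Ioi (0:ℝ)) := by
            rw [Real.volume_Ioi, ENNReal.mul_top hA]
        _ = ∫⁻ _ in Set.Ioi (0:ℝ), μ {x | h x = ⊤} := (setLIntegral_const _ _).symm
        _ ≤ ∫⁻ u in Set.Ioi (0:ℝ), μ {x | ENNReal.ofReal u < h x} := by
            refine lintegral_mono fun u => measure_mono fun x hx => ?_
            simp only [Set.mem_setOf_eq] at hx ⊢
            rw [hx]; exact ENNReal.ofReal_lt_top
    rw [lhs, rhs]

/-- The decreasing rearrangement `f*(t) = inf {λ : ρ(|f| > λ) ≤ t}` (with `inf ∅ = ∞`). -/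
noncomputable def decRearr {X : Type*} [MeasurableSpace X] (ρ : Measure X)
    (f : X → ℂ) (t : ENNReal) : ENNReal :=
  sInf {l : ENNReal | ρ {x | l < (‖f x‖₊ : ENNReal)} ≤ t}

lemma lt_decRearr_iff {X : Type*} [MeasurableSpace X] (ρ : Measure X) (f : X → ℂ)
    (s t : ENNReal) :
    s < decRearr ρ f t ↔ t < ρ {x | s < (‖f x‖₊ : ENNReal)} := by
  constructor
  · intro hs
    by_contra hle
    push_neg at hle
    have hmem : s ∈ {l : ENNReal | ρ {x | l < (‖f x‖₊ : ENNReal)} ≤ t} := hle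
    exact absurd (sInf_le hmem : decRearr ρ f t ≤ s) (not_le.mpr hs)
  · intro ht
    by_contra hle
    push_neg at hle
    -- hle : decRearr ρ f t ≤ s
    have hs_ne : s ≠ ⊤ := by
      rintro rfl
      have : ρ {x | (⊤ : ENNReal) < (‖f x‖₊ : ENNReal)} = 0 := by
        convert measure_empty
        · ext x; simp [not_top_lt, (ENNReal.coe_lt_top).not_gt]
        · infer_instance
      rw [this] at ht
      exact absurd ht (not_lt.mpr zero_le)
    obtain ⟨u, hu_anti, hu_mem, hu_tendsto⟩ :=
      exists_seq_strictAnti_tendsto' (lt_top_iff_ne_top.mpr hs_ne)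
    have hsub : {x | s < (‖f x‖₊ : ENNReal)} ⊆ ⋃ n, {x | u n < (‖f x‖₊ : ENNReal)} := by
      intro x hx
      simp only [Set.mem_setOf_eq] at hx
      have : ∀ᶠ n in Filter.atTop, u n < (‖f x‖₊ : ENNReal) :=
        hu_tendsto.eventually (Filter.tendsto_id.eventually_lt_const hx)
      obtain ⟨n, hn⟩ := this.exists
      exact Set.mem_iUnion.mpr ⟨n, hn⟩
    have hmono : Monotone fun n => {x | u n < (‖f x‖₊ : ENNReal)} := by
      intro m n hmn x hx
      exact lt_of_le_of_lt (hu_anti.antitone hmn) hx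
    have key : ρ {x | s < (‖f x‖₊ : ENNReal)} ≤ t := by
      calc ρ {x | s < (‖f x‖₊ : ENNReal)}
          ≤ ρ (⋃ n, {x | u n < (‖f x‖₊ : ENNReal)}) := measure_mono hsub
        _ = ⨆ n, ρ {x | u n < (‖f x‖₊ : ENNReal)} :=
            Directed.measure_iUnion hmono.directed_le
        _ ≤ t := by
            refine iSup_le fun n => ?_
            have hlt : sInf {l : ENNReal | ρ {x | l < (‖f x‖₊ : ENNReal)} ≤ t} < u n :=
              lt_of_le_of_lt hle (hu_mem n).1
            obtain ⟨m, hm, hmu⟩ := sInf_lt_iff.mp hlt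
            exact le_trans (measure_mono fun x hx => lt_trans hmu hx) hm
    exact absurd key (not_le.mpr ht)

lemma decRearr_equimeasurable {X : Type*} [MeasurableSpace X] (ρ : Measure X) (f : X → ℂ)
    (s : ENNReal) :
    volume.restrict (Set.Ioi (0:ℝ)) {t | s < decRearr ρ f (ENNReal.ofReal t)}
      = ρ {x | s < (‖f x‖₊ : ENNReal)} := by
  set c := ρ {x | s < (‖f x‖₊ : ENNReal)} with hc
  have hset : {t : ℝ | s < decRearr ρ f (ENNReal.ofReal t)} = {t : ℝ | ENNReal.ofReal t < c} := by
    ext t; exact lt_decRearr_iff ρ f s (ENNReal.ofReal t)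
  have hmeas : MeasurableSet {t : ℝ | ENNReal.ofReal t < c} :=
    measurableSet_lt ENNReal.measurable_ofReal measurable_const
  rw [hset, Measure.restrict_apply hmeas]
  rcases eq_or_ne c ⊤ with hctop | hcne
  · have : {t : ℝ | ENNReal.ofReal t < c} ∩ Set.Ioi 0 = Set.Ioi 0 := by
      refine Set.inter_eq_right.mpr fun t _ => ?_
      simp only [Set.mem_setOf_eq, hctop]
      exact ENNReal.ofReal_lt_top
    rw [this, Real.volume_Ioi, hctop]
  · have : {t : ℝ | ENNReal.ofReal t < c} ∩ Set.Ioi 0 = Set.Ioo 0 c.toReal := by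
      ext t
      simp only [Set.mem_inter_iff, Set.mem_setOf_eq, Set.mem_Ioi, Set.mem_Ioo]
      constructor
      · rintro ⟨h1, h2⟩
        exact ⟨h2, (ENNReal.ofReal_lt_iff_lt_toReal (le_of_lt h2) hcne).mp h1⟩
      · rintro ⟨h1, h2⟩
        exact ⟨(ENNReal.ofReal_lt_iff_lt_toReal (le_of_lt h1) hcne).mpr h2, h1⟩
    rw [this, Real.volume_Ioo, sub_zero, ENNReal.ofReal_toReal hcne]

/-- For `Ψ` continuous, increasing, with `Ψ(0) = 0`:
`∫_X Ψ(|f|) dρ = ∫_0^∞ Ψ(f*(t)) dt`. -/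
theorem stmt15 {X : Type*} [MeasurableSpace X] (ρ : Measure X) (f : X → ℂ)
    (hf : Measurable f)
    (Ψ : ENNReal → ENNReal) (hΨc : Continuous Ψ) (hΨm : Monotone Ψ) (hΨ0 : Ψ 0 = 0) :
    ∫⁻ x, Ψ (‖f x‖₊ : ENNReal) ∂ρ =
      ∫⁻ t in Set.Ioi (0:ℝ), Ψ (decRearr ρ f (ENNReal.ofReal t)) := by
  have hgm : Measurable fun x => (‖f x‖₊ : ENNReal) :=
    hf.nnnorm.coe_nnreal_ennreal
  have hFanti : Antitone fun t : ℝ => decRearr ρ f (ENNReal.ofReal t) := by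
    intro a b hab
    exact sInf_le_sInf fun l hl => le_trans hl (ENNReal.ofReal_le_ofReal hab)
  have hFm : Measurable fun t : ℝ => decRearr ρ f (ENNReal.ofReal t) := hFanti.measurable
  -- key: for λ > 0, {a | λ < Ψ a} = {a | s < a} for s = sSup {a | Ψ a ≤ λ}
  have key : ∀ l : ENNReal, l ≠ 0 → ∀ a, (l < Ψ a ↔ sSup {b | Ψ b ≤ l} < a) := by
    intro l hl a
    set s := sSup {b | Ψ b ≤ l} with hs
    have hA_closed : IsClosed {b : ENNReal | Ψ b ≤ l} := isClosed_le hΨc continuous_const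
    have hA_ne : {b : ENNReal | Ψ b ≤ l}.Nonempty := ⟨0, by simp [hΨ0]⟩
    have hsmem : s ∈ {b : ENNReal | Ψ b ≤ l} :=
      hA_closed.closure_subset (sSup_mem_closure hA_ne)
    constructor
    · intro h
      have hub : ∀ b ∈ {b : ENNReal | Ψ b ≤ l}, b ≤ a := by
        intro b hb
        by_contra hba
        push_neg at hba
        exact absurd (le_trans (hΨm hba.le) hb) (not_le.mpr h)
      have hsa : s ≤ a := sSup_le hub
      rcases hsa.lt_or_eq with h' | h'
      · exact h'
      · exact absurd (h' ▸ hsmem) (not_le.mpr h)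
    · intro h
      by_contra hle
      push_neg at hle
      have hmem : a ∈ {b : ENNReal | Ψ b ≤ l} := hle
      exact absurd (le_sSup hmem : a ≤ s) (not_le.mpr h)
  rw [layercake_ennreal ρ (fun x => Ψ (‖f x‖₊ : ENNReal)) (hΨc.measurable.comp hgm),
      layercake_ennreal (volume.restrict (Set.Ioi (0:ℝ)))
        (fun t => Ψ (decRearr ρ f (ENNReal.ofReal t))) (hΨc.measurable.comp hFm)]
  apply setLIntegral_congr_fun measurableSet_Ioi
  intro u hu
  have hu0 : ENNReal.ofReal u ≠ 0 := (ENNReal.ofReal_pos.mpr hu).ne'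
  set s := sSup {b | Ψ b ≤ ENNReal.ofReal u} with hs
  calc ρ {x | ENNReal.ofReal u < Ψ (‖f x‖₊ : ENNReal)}
      = ρ {x | s < (‖f x‖₊ : ENNReal)} := by
        congr 1; ext x; exact key _ hu0 _
    _ = volume.restrict (Set.Ioi (0:ℝ)) {t | s < decRearr ρ f (ENNReal.ofReal t)} :=
        (decRearr_equimeasurable ρ f s).symm
    _ = volume.restrict (Set.Ioi (0:ℝ))
          {t | ENNReal.ofReal u < Ψ (decRearr ρ f (ENNReal.ofReal t))} := by
        congr 1; ext t; exact (key _ hu0 _).symm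
end

section
/- (Hardy's inequality on $(0,1)$) Let $1 < p < \infty$ and $\psi$ be a nonnegative measurable function on $(0,1)$. Then $\left( \int_0^1 \left( \frac{1}{t} \int_0^t \psi(s)\,ds \right)^p dt \right)^{1/p} \le p' \left( \int_0^1 \psi(s)^p \, ds \right)^{1/p}$, where $p' = p/(p-1)$. -/
open MeasureTheory
open scoped ENNReal

lemma lint_rpow_Ioo {a b r : ℝ} (ha : 0 ≤ a) (hab : a ≤ b)
    (h : -1 < r ∨ (r ≠ -1 ∧ 0 < a)) :
    ∫⁻ x in Set.Ioo a b, ENNReal.ofReal (x ^ r) =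
      ENNReal.ofReal ((b ^ (r + 1) - a ^ (r + 1)) / (r + 1)) := by
  have hInt : IntervalIntegrable (fun x => x ^ r) volume a b := by
    rcases h with h | ⟨h1, h2⟩
    · exact intervalIntegral.intervalIntegrable_rpow' h
    · refine intervalIntegral.intervalIntegrable_rpow (Or.inr ?_)
      rw [Set.uIcc_of_le hab]
      intro hc
      exact absurd (hc.1) (not_le.2 h2)
  have hIoc : ∫⁻ x in Set.Ioc a b, ENNReal.ofReal (x ^ r) =
      ENNReal.ofReal ((b ^ (r + 1) - a ^ (r + 1)) / (r + 1)) := by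
    rw [← MeasureTheory.ofReal_integral_eq_lintegral_ofReal
      ((intervalIntegrable_iff_integrableOn_Ioc_of_le hab).1 hInt)]
    · rw [← intervalIntegral.integral_of_le hab, integral_rpow]
      rcases h with h | ⟨h1, h2⟩
      · exact Or.inl h
      · refine Or.inr ⟨h1, ?_⟩
        rw [Set.uIcc_of_le hab]; intro hc; exact absurd hc.1 (not_le.2 h2)
    · filter_upwards [ae_restrict_mem measurableSet_Ioc] with x hx
      exact Real.rpow_nonneg (le_trans ha hx.1.le) r
  rw [← hIoc]
  exact setLIntegral_congr Ioo_ae_eq_Ioc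

/-- Hardy's inequality on `(0,1)`: for `1 < p < ∞` and nonnegative measurable `ψ`,
`(∫_0^1 (t⁻¹ ∫_0^t ψ)^p dt)^{1/p} ≤ p' (∫_0^1 ψ^p)^{1/p}` with `p' = p/(p-1)`. -/
theorem stmt18 (p : ℝ) (hp : 1 < p) (ψ : ℝ → ℝ) (hmeas : Measurable ψ)
    (hpos : ∀ s, 0 ≤ ψ s) :
    (∫⁻ t in Set.Ioo (0:ℝ) 1,
        (ENNReal.ofReal (1/t) * ∫⁻ s in Set.Ioo (0:ℝ) t, ENNReal.ofReal (ψ s)) ^ p) ^ (1/p) ≤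
      ENNReal.ofReal (p / (p - 1)) *
        (∫⁻ s in Set.Ioo (0:ℝ) 1, ENNReal.ofReal (ψ s) ^ p) ^ (1/p) := by
  set q : ℝ := p / (p - 1) with hq_def
  have hpq : p.HolderConjugate q := Real.HolderConjugate.conjExponent hp
  have hp0 : 0 < p := hpq.pos
  have hq0 : 0 < q := hpq.symm.pos
  have hpq' : p / q = p - 1 := hpq.div_conj_eq_sub_one
  have hdivq : (1/q) * p = p - 1 := by
    rw [one_div, inv_mul_eq_div]; exact hpq'
  have hinv : p⁻¹ + q⁻¹ = 1 := hpq.inv_add_inv_eq_one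
  have hq1p : (1:ℝ)/q = 1 - 1/p := by
    rw [one_div, one_div]; linarith
  -- exponent appearing after Hölder
  set e : ℝ := (p - 1)/q - p with he_def
  have he1 : e + 1 = -(1/q) := by
    have h2 : (p - 1) * q = p := hpq.sub_one_mul_conj
    rw [he_def]
    field_simp
    nlinarith [h2]
  have heneg : e ≠ -1 := by
    intro h
    have : (0:ℝ) < 1/q := by positivity
    rw [h] at he1; simp at he1; linarith
  set F : ℝ → ℝ≥0∞ := fun s => ENNReal.ofReal (ψ s) with hF_def
  have hFmeas : Measurable F := ENNReal.measurable_ofReal.comp hmeas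
  set G : ℝ → ℝ≥0∞ := fun s => F s ^ p * ENNReal.ofReal s ^ ((1:ℝ)/q) with hG_def
  have hGmeas : Measurable G := by
    apply Measurable.mul
    · exact hFmeas.pow_const _
    · exact (ENNReal.measurable_ofReal.comp measurable_id).pow_const _
  set A : ℝ → ℝ≥0∞ := fun t => ∫⁻ s in Set.Ioo 0 t, G s with hA_def
  set I : ℝ≥0∞ := ∫⁻ s in Set.Ioo (0:ℝ) 1, F s ^ p with hI_def
  -- Step 1: pointwise Hölder bound
  have step1 : ∀ t ∈ Set.Ioo (0:ℝ) 1,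
      (ENNReal.ofReal (1/t) * ∫⁻ s in Set.Ioo (0:ℝ) t, F s) ^ p ≤
        ENNReal.ofReal (q ^ (p-1)) * (ENNReal.ofReal (t ^ e) * A t) := by
    intro t ht
    obtain ⟨ht0, ht1⟩ := ht
    set r : ℝ := 1/(p*q) with hr_def
    have hrp : r * p = 1/q := by rw [hr_def]; field_simp
    have hrq : (-r) * q = -(1/p) := by rw [hr_def]; field_simp
    set u : ℝ → ℝ≥0∞ := fun s => F s * ENNReal.ofReal s ^ r with hu_def
    set v : ℝ → ℝ≥0∞ := fun s => ENNReal.ofReal s ^ (-r) with hv_def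
    have humeas : Measurable u :=
      hFmeas.mul ((ENNReal.measurable_ofReal.comp measurable_id).pow_const _)
    have hvmeas : Measurable v :=
      (ENNReal.measurable_ofReal.comp measurable_id).pow_const _
    have hcong : (∫⁻ s in Set.Ioo (0:ℝ) t, F s) = ∫⁻ s in Set.Ioo (0:ℝ) t, (u * v) s := by
      refine lintegral_congr_ae ?_
      filter_upwards [ae_restrict_mem measurableSet_Ioo] with s hs
      have hx0 : (ENNReal.ofReal s) ≠ 0 := by
        simp only [ne_eq, ENNReal.ofReal_eq_zero, not_le]; exact hs.1
      have hxt : (ENNReal.ofReal s) ≠ ⊤ := ENNReal.ofReal_ne_top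
      have : u s * v s = F s * (ENNReal.ofReal s ^ r * ENNReal.ofReal s ^ (-r)) := by
        rw [hu_def, hv_def]; ring
      rw [Pi.mul_apply, this, ← ENNReal.rpow_add r (-r) hx0 hxt, add_neg_cancel,
        ENNReal.rpow_zero, mul_one]
    have hup : (∫⁻ s in Set.Ioo (0:ℝ) t, u s ^ p) = A t := by
      refine lintegral_congr (fun s => ?_)
      rw [hu_def, hG_def]
      simp only []
      rw [ENNReal.mul_rpow_of_nonneg _ _ hp0.le, ← ENNReal.rpow_mul, hrp]
    have hvq : (∫⁻ s in Set.Ioo (0:ℝ) t, v s ^ q) = ENNReal.ofReal (q * t^((1:ℝ)/q)) := by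
      have h1 : ∀ s ∈ Set.Ioo (0:ℝ) t, v s ^ q = ENNReal.ofReal (s ^ (-(1/p))) := by
        intro s hs
        rw [hv_def]
        simp only []
        rw [← ENNReal.rpow_mul, hrq, ENNReal.ofReal_rpow_of_pos hs.1]
      rw [setLIntegral_congr_fun measurableSet_Ioo h1]
      have hexp : -1 < -(1/p) := by
        have : 1/p < 1 := by rw [div_lt_one hp0]; exact hp
        linarith
      rw [lint_rpow_Ioo le_rfl ht0.le (Or.inl hexp)]
      have h2 : -(1/p) + 1 = 1/q := by rw [hq1p]; ring
      have h3 : (0:ℝ) < 1/q := by positivity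
      rw [h2, Real.zero_rpow (ne_of_gt h3), sub_zero]
      congr 1
      field_simp
    have holder := ENNReal.lintegral_mul_le_Lp_mul_Lq
      (volume.restrict (Set.Ioo (0:ℝ) t)) hpq humeas.aemeasurable hvmeas.aemeasurable
    rw [← hcong, hup, hvq] at holder
    have hmono : (ENNReal.ofReal (1/t) * ∫⁻ s in Set.Ioo (0:ℝ) t, F s) ^ p ≤
        (ENNReal.ofReal (1/t) *
          ((A t) ^ ((1:ℝ)/p) * ENNReal.ofReal (q * t^((1:ℝ)/q)) ^ ((1:ℝ)/q))) ^ p :=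
      ENNReal.rpow_le_rpow (mul_le_mul_right holder _) hp0.le
    refine le_trans hmono (le_of_eq ?_)
    rw [ENNReal.mul_rpow_of_nonneg _ _ hp0.le, ENNReal.mul_rpow_of_nonneg _ _ hp0.le,
      ← ENNReal.rpow_mul (A t), ← ENNReal.rpow_mul]
    have h4 : (1:ℝ)/p * p = 1 := by field_simp
    rw [h4, ENNReal.rpow_one, hdivq,
      ENNReal.ofReal_rpow_of_pos (by positivity : (0:ℝ) < 1/t),
      ENNReal.ofReal_rpow_of_pos (by positivity : (0:ℝ) < q * t^((1:ℝ)/q))]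
    have hreal : (1/t)^p * (q * t^((1:ℝ)/q))^(p-1) = q^(p-1) * t^e := by
      rw [Real.mul_rpow hq0.le (Real.rpow_nonneg ht0.le _), ← Real.rpow_mul ht0.le,
        one_div t, Real.inv_rpow ht0.le, ← Real.rpow_neg ht0.le, he_def,
        show (p-1)/q - p = -p + 1/q*(p-1) by ring, Real.rpow_add ht0]
      ring
    calc ENNReal.ofReal ((1/t)^p) * ((A t) * ENNReal.ofReal ((q * t^((1:ℝ)/q))^(p-1)))
        = ENNReal.ofReal ((1/t)^p) * ENNReal.ofReal ((q * t^((1:ℝ)/q))^(p-1)) * A t := by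
          ring
      _ = ENNReal.ofReal ((1/t)^p * (q * t^((1:ℝ)/q))^(p-1)) * A t := by
          rw [← ENNReal.ofReal_mul (by positivity)]
      _ = ENNReal.ofReal (q^(p-1) * t^e) * A t := by rw [hreal]
      _ = ENNReal.ofReal (q^(p-1)) * (ENNReal.ofReal (t^e) * A t) := by
          rw [ENNReal.ofReal_mul (by positivity)]; ring
  -- Step 2: integrate the bound
  have step2 : (∫⁻ t in Set.Ioo (0:ℝ) 1,
      (ENNReal.ofReal (1/t) * ∫⁻ s in Set.Ioo (0:ℝ) t, F s) ^ p) ≤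
      ENNReal.ofReal (q ^ (p-1)) * ∫⁻ t in Set.Ioo (0:ℝ) 1,
        ENNReal.ofReal (t ^ e) * A t := by
    rw [← lintegral_const_mul' _ _ ENNReal.ofReal_ne_top]
    refine lintegral_mono_ae ?_
    filter_upwards [ae_restrict_mem measurableSet_Ioo] with t ht
    exact step1 t ht
  -- Step 3: Tonelli
  have step3 : (∫⁻ t in Set.Ioo (0:ℝ) 1, ENNReal.ofReal (t ^ e) * A t) ≤
      ENNReal.ofReal q * I := by
    set Φ : ℝ → ℝ → ℝ≥0∞ :=
      fun t s => if s < t then ENNReal.ofReal (t ^ e) * G s else 0 with hPhi_def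
    have hPhimeas : Measurable (Function.uncurry Φ) := by
      apply Measurable.ite
      · exact measurableSet_lt measurable_snd measurable_fst
      · exact (((measurable_fst.pow measurable_const).ennreal_ofReal : Measurable fun z : ℝ × ℝ => ENNReal.ofReal (z.1 ^ e))).mul
          (hGmeas.comp measurable_snd)
      · exact measurable_const
    have h1 : ∀ t ∈ Set.Ioo (0:ℝ) 1,
        ENNReal.ofReal (t ^ e) * A t = ∫⁻ s in Set.Ioo (0:ℝ) 1, Φ t s := by
      intro t ht
      have hset : Set.Iio t ∩ Set.Ioo (0:ℝ) 1 = Set.Ioo 0 t := by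
        ext s
        constructor
        · rintro ⟨h1, h2, h3⟩; exact ⟨h2, h1⟩
        · rintro ⟨h2, h1⟩; exact ⟨h1, h2, lt_trans h1 ht.2⟩
      have heq : ∀ s : ℝ, Φ t s = (Set.Iio t).indicator
          (fun s => ENNReal.ofReal (t ^ e) * G s) s := by
        intro s
        rw [hPhi_def, Set.indicator_apply]
        simp [Set.mem_Iio]
      calc ENNReal.ofReal (t ^ e) * A t
          = ∫⁻ s in Set.Ioo (0:ℝ) t, ENNReal.ofReal (t ^ e) * G s :=
            (lintegral_const_mul' _ _ ENNReal.ofReal_ne_top).symm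
        _ = ∫⁻ s in Set.Iio t ∩ Set.Ioo (0:ℝ) 1,
              ENNReal.ofReal (t ^ e) * G s := by rw [hset]
        _ = ∫⁻ s in Set.Ioo (0:ℝ) 1,
              (Set.Iio t).indicator (fun s => ENNReal.ofReal (t ^ e) * G s) s := by
            rw [lintegral_indicator measurableSet_Iio,
              Measure.restrict_restrict measurableSet_Iio]
        _ = ∫⁻ s in Set.Ioo (0:ℝ) 1, Φ t s := by
            refine lintegral_congr fun s => ?_
            rw [heq s]
    have h3 : ∀ s ∈ Set.Ioo (0:ℝ) 1,
        (∫⁻ t in Set.Ioo (0:ℝ) 1, Φ t s) =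
          (∫⁻ t in Set.Ioo s 1, ENNReal.ofReal (t ^ e)) * G s := by
      intro s hs
      have hset : Set.Ioi s ∩ Set.Ioo (0:ℝ) 1 = Set.Ioo s 1 := by
        ext t
        constructor
        · rintro ⟨h1, h2, h3⟩; exact ⟨h1, h3⟩
        · rintro ⟨h1, h3⟩; exact ⟨h1, lt_trans hs.1 h1, h3⟩
      have heq : ∀ t : ℝ, Φ t s = (Set.Ioi s).indicator
          (fun t => ENNReal.ofReal (t ^ e) * G s) t := by
        intro t
        rw [hPhi_def, Set.indicator_apply]
        simp [Set.mem_Ioi]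
      calc (∫⁻ t in Set.Ioo (0:ℝ) 1, Φ t s)
          = ∫⁻ t in Set.Ioo (0:ℝ) 1,
              (Set.Ioi s).indicator (fun t => ENNReal.ofReal (t ^ e) * G s) t := by
            refine lintegral_congr fun t => ?_
            rw [heq t]
        _ = ∫⁻ t in Set.Ioi s ∩ Set.Ioo (0:ℝ) 1, ENNReal.ofReal (t ^ e) * G s := by
            rw [lintegral_indicator measurableSet_Ioi,
              Measure.restrict_restrict measurableSet_Ioi]
        _ = ∫⁻ t in Set.Ioo s 1, ENNReal.ofReal (t ^ e) * G s := by rw [hset]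
        _ = (∫⁻ t in Set.Ioo s 1, ENNReal.ofReal (t ^ e)) * G s :=
            lintegral_mul_const _ ((measurable_id.pow measurable_const).ennreal_ofReal)
    have h4 : ∀ s ∈ Set.Ioo (0:ℝ) 1,
        (∫⁻ t in Set.Ioo s 1, ENNReal.ofReal (t ^ e)) ≤
          ENNReal.ofReal q * ENNReal.ofReal (s ^ (-(1/q))) := by
      intro s hs
      rw [lint_rpow_Ioo hs.1.le hs.2.le (Or.inr ⟨heneg, hs.1⟩), he1, Real.one_rpow,
        ← ENNReal.ofReal_mul hq0.le]
      refine ENNReal.ofReal_le_ofReal ?_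
      have h5 : (1 - s ^ (-(1/q))) / (-(1/q)) = q * (s ^ (-(1/q)) - 1) := by
        field_simp
        ring
      rw [h5]
      have h6 : (0:ℝ) ≤ s ^ (-(1/q)) := Real.rpow_nonneg hs.1.le _
      nlinarith
    have h5 : ∀ s ∈ Set.Ioo (0:ℝ) 1,
        (ENNReal.ofReal q * ENNReal.ofReal (s ^ (-(1/q)))) * G s =
          ENNReal.ofReal q * F s ^ p := by
      intro s hs
      have hx0 : (ENNReal.ofReal s) ≠ 0 := by
        simp only [ne_eq, ENNReal.ofReal_eq_zero, not_le]; exact hs.1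
      rw [hG_def]
      simp only []
      rw [← ENNReal.ofReal_rpow_of_pos hs.1]
      calc ENNReal.ofReal q * ENNReal.ofReal s ^ (-(1/q)) * (F s ^ p * ENNReal.ofReal s ^ ((1:ℝ)/q))
          = ENNReal.ofReal q * F s ^ p *
              (ENNReal.ofReal s ^ ((1:ℝ)/q) * ENNReal.ofReal s ^ (-((1:ℝ)/q))) := by ring
        _ = ENNReal.ofReal q * F s ^ p := by
            rw [← ENNReal.rpow_add _ _ hx0 ENNReal.ofReal_ne_top, add_neg_cancel,
              ENNReal.rpow_zero, mul_one]
    calc (∫⁻ t in Set.Ioo (0:ℝ) 1, ENNReal.ofReal (t ^ e) * A t)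
        = ∫⁻ t in Set.Ioo (0:ℝ) 1, ∫⁻ s in Set.Ioo (0:ℝ) 1, Φ t s := by
          refine lintegral_congr_ae ?_
          filter_upwards [ae_restrict_mem measurableSet_Ioo] with t ht
          exact h1 t ht
      _ = ∫⁻ s in Set.Ioo (0:ℝ) 1, ∫⁻ t in Set.Ioo (0:ℝ) 1, Φ t s :=
          lintegral_lintegral_swap hPhimeas.aemeasurable
      _ = ∫⁻ s in Set.Ioo (0:ℝ) 1, (∫⁻ t in Set.Ioo s 1, ENNReal.ofReal (t ^ e)) * G s := by
          refine lintegral_congr_ae ?_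
          filter_upwards [ae_restrict_mem measurableSet_Ioo] with s hs
          exact h3 s hs
      _ ≤ ∫⁻ s in Set.Ioo (0:ℝ) 1, (ENNReal.ofReal q * ENNReal.ofReal (s ^ (-(1/q)))) * G s := by
          refine lintegral_mono_ae ?_
          filter_upwards [ae_restrict_mem measurableSet_Ioo] with s hs
          exact mul_le_mul_left (h4 s hs) _
      _ = ∫⁻ s in Set.Ioo (0:ℝ) 1, ENNReal.ofReal q * F s ^ p := by
          refine lintegral_congr_ae ?_
          filter_upwards [ae_restrict_mem measurableSet_Ioo] with s hs
          exact h5 s hs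
      _ = ENNReal.ofReal q * I := lintegral_const_mul' _ _ ENNReal.ofReal_ne_top
  -- Step 4: conclude
  have hchain : (∫⁻ t in Set.Ioo (0:ℝ) 1,
      (ENNReal.ofReal (1/t) * ∫⁻ s in Set.Ioo (0:ℝ) t, F s) ^ p) ≤
      ENNReal.ofReal (q ^ p) * I := by
    refine le_trans (le_trans step2 (mul_le_mul_right step3 _)) (le_of_eq ?_)
    rw [← mul_assoc, ← ENNReal.ofReal_mul (by positivity)]
    have hqq : q ^ (p-1) * q = q ^ p := by
      nth_rewrite 2 [← Real.rpow_one q]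
      rw [← Real.rpow_add hq0]
      norm_num
    rw [hqq]
  calc (∫⁻ t in Set.Ioo (0:ℝ) 1,
        (ENNReal.ofReal (1/t) * ∫⁻ s in Set.Ioo (0:ℝ) t, F s) ^ p) ^ (1/p)
      ≤ (ENNReal.ofReal (q ^ p) * I) ^ (1/p) :=
        ENNReal.rpow_le_rpow hchain (by positivity)
    _ = ENNReal.ofReal (q ^ p) ^ ((1:ℝ)/p) * I ^ ((1:ℝ)/p) :=
        ENNReal.mul_rpow_of_nonneg _ _ (by positivity)
    _ = ENNReal.ofReal q * I ^ ((1:ℝ)/p) := by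
        rw [ENNReal.ofReal_rpow_of_pos (by positivity), ← Real.rpow_mul hq0.le,
          mul_one_div_cancel hp0.ne', Real.rpow_one]
end
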